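/- Let Q̂ be an n×n real symmetric positive definite matrix and suppose x* ∈ [0,1]^n maximizes the quadratic form over the hypercube, i.e. xᵗ Q̂ x ≤ (x*)ᵗ Q̂ x* for all x ∈ [0,1]^n. Then x* is binary: x*_i ∈ {0,1} for every i. In other words, any maximizer of the continuous relaxation is automatically integral. -/

import Mathlib

open Matrix

/-- if `Q̂` is symmetric positive definite and `x*` maximizes the
quadratic form over the hypercube `[0,1]^n`, then `x*` is binary. -/
theorem stmt6 {n : ℕ} (Q : Matrix (Fin n) (Fin n) ℝ) (hQ : Q.PosDef)
    (xstar : Fin n → ℝ) (hxstar : ∀ i, 0 ≤ xstar i ∧ xstar i ≤ 1)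
    (hmax : ∀ x : Fin n → ℝ, (∀ i, 0 ≤ x i ∧ x i ≤ 1) →
      x ⬝ᵥ Q.mulVec x ≤ xstar ⬝ᵥ Q.mulVec xstar) :
    ∀ i, xstar i = 0 ∨ xstar i = 1 := by
  intro i
  by_contra hc
  push_neg at hc
  obtain ⟨hne0, hne1⟩ := hc
  have h0 : 0 < xstar i := lt_of_le_of_ne (hxstar i).1 (Ne.symm hne0)
  have h1 : xstar i < 1 := lt_of_le_of_ne (hxstar i).2 hne1
  set e : Fin n → ℝ := Pi.single i 1 with he
  have hee : 0 < e ⬝ᵥ Q.mulVec e := by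
    have hne : e ≠ 0 := by
      intro h
      have := congrFun h i
      simp [he, Pi.single_eq_same] at this
    have := hQ.dotProduct_mulVec_pos hne
    simpa using this
  have hsym : ∀ v : Fin n → ℝ, v ⬝ᵥ Q.mulVec e = e ⬝ᵥ Q.mulVec v := by
    intro v
    have hQs : Qᵀ = Q := by
      have := hQ.1
      simpa [Matrix.IsHermitian] using this
    rw [Matrix.dotProduct_mulVec, ← Matrix.mulVec_transpose, hQs,
      dotProduct_comm]
  have key : ∀ t : ℝ, (xstar + t • e) ⬝ᵥ Q.mulVec (xstar + t • e)
      = xstar ⬝ᵥ Q.mulVec xstar + 2 * t * (e ⬝ᵥ Q.mulVec xstar)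
        + t ^ 2 * (e ⬝ᵥ Q.mulVec e) := by
    intro t
    simp only [Matrix.mulVec_add, Matrix.mulVec_smul, add_dotProduct,
      dotProduct_add, smul_dotProduct, dotProduct_smul,
      smul_eq_mul]
    rw [hsym xstar]
    ring
  have hx : ∀ t : ℝ, 0 ≤ xstar i + t → xstar i + t ≤ 1 →
      2 * t * (e ⬝ᵥ Q.mulVec xstar) + t ^ 2 * (e ⬝ᵥ Q.mulVec e) ≤ 0 := by
    intro t ht0 ht1
    have hbound : ∀ j, 0 ≤ (xstar + t • e) j ∧ (xstar + t • e) j ≤ 1 := by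
      intro j
      by_cases hji : j = i
      · subst hji
        simp [he, Pi.single_eq_same]
        constructor <;> linarith
      · simp [he, Pi.single_eq_of_ne hji]
        exact hxstar j
    have := hmax _ hbound
    rw [key t] at this
    linarith
  set a : ℝ := e ⬝ᵥ Q.mulVec xstar
  set b : ℝ := e ⬝ᵥ Q.mulVec e
  have hA := hx (-(xstar i)) (by linarith) (by linarith)
  have hB := hx (1 - xstar i) (by linarith) (by linarith)
  -- multiply hA by (1 - xstar i), hB by xstar i, add
  nlinarith [mul_pos (mul_pos h0 (by linarith : (0:ℝ) < 1 - xstar i)) hee,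
    mul_nonneg (by linarith : (0:ℝ) ≤ 1 - xstar i) (neg_nonneg.mpr hA),
    mul_nonneg h0.le (neg_nonneg.mpr hB)]
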